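/- Suppose λ > 0, 0 < α < 4/λ, and β ∈ (max(-1 + αλ/2, 0), 1). Then every complex root μ ∈ ℂ of the quadratic t(μ) = μ² - (1 + β - αλ)μ + β satisfies |μ| < 1. -/

import Mathlib

/-- Suppose `λ > 0`, `0 < α < 4/λ`, and `β ∈ (max(-1 + αλ/2, 0), 1)`.
Then every complex root `μ` of the quadratic `t(μ) = μ² - (1 + β - αλ)μ + β`
satisfies `|μ| < 1`. -/
theorem stmt_4 (α β lam : ℝ) (hlam : 0 < lam) (hα : 0 < α) (hα' : α < 4 / lam)
    (hβ : β ∈ Set.Ioo (max (-1 + α * lam / 2) 0) 1) :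
    ∀ μ : ℂ, μ ^ 2 - ((1 + β - α * lam : ℝ) : ℂ) * μ + ((β : ℝ) : ℂ) = 0 →
      ‖μ‖ < 1 := by
  obtain ⟨hβl, hβ1⟩ := hβ
  have hβ0 : 0 < β := lt_of_le_of_lt (le_max_right _ _) hβl
  have hβa : -1 + α * lam / 2 < β := lt_of_le_of_lt (le_max_left _ _) hβl
  have hal : 0 < α * lam := mul_pos hα hlam
  intro μ hμ
  set x : ℝ := μ.re with hx
  set y : ℝ := μ.im with hy
  have hre : x ^ 2 - y ^ 2 - (1 + β - α * lam) * x + β = 0 := by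
    have h := congrArg Complex.re hμ
    simp [pow_two, Complex.mul_re, Complex.mul_im, Complex.add_re, Complex.sub_re] at h
    linear_combination h
  have him : y * (2 * x - (1 + β - α * lam)) = 0 := by
    have h := congrArg Complex.im hμ
    simp [pow_two, Complex.mul_re, Complex.mul_im, Complex.add_im, Complex.sub_im] at h
    linear_combination h
  have hsq : x ^ 2 + y ^ 2 < 1 := by
    rcases mul_eq_zero.mp him with hy0 | hx2
    · -- real root
      rw [hy0] at hre ⊢
      by_contra h
      push_neg at h
      rcases le_or_gt 1 x with h1 | h1
      · have hxb : (0:ℝ) ≤ (x - 1) * (x - β) :=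
          mul_nonneg (by linarith) (by linarith)
        nlinarith [mul_pos hal (show (0:ℝ) < x by linarith)]
      · have hx1 : x ≤ -1 := by nlinarith
        have hxb : (0:ℝ) ≤ (-(x + 1)) * (-(x + β)) :=
          mul_nonneg (by linarith) (by linarith)
        nlinarith [mul_pos (show (0:ℝ) < 2 + 2 * β - α * lam by linarith)
          (show (0:ℝ) < -x by linarith)]
    · -- complex pair: 2x = 1 + β - αλ
      nlinarith [hx2]
  have habs : ‖μ‖ ^ 2 < 1 := by
    rw [Complex.sq_norm, Complex.normSq_apply]
    nlinarith
  nlinarith [norm_nonneg μ]
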